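/- The extended Gray map Φ : Rⁿ → (ZMod 2)^{3n} is a distance-preserving map from Rⁿ with the Lee distance to (ZMod 2)^{3n} with the Hamming distance: for all x, y ∈ Rⁿ, the Hamming distance between Φ(x) and Φ(y) equals d_L(x, y) = Σᵢ w_L(xᵢ - yᵢ). -/

import Mathlib

open Polynomial

noncomputable section

/-- The ring `R = F₂ + uF₂ + u²F₂` with `u³ = u`, realized as `(ZMod 2)[X] ⧸ ⟨X³ - X⟩`. -/
abbrev R : Type := Polynomial (ZMod 2) ⧸ Ideal.span ({X ^ 3 - X} : Set (Polynomial (ZMod 2)))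

/-- `u` is the residue class of `X` in `R`. -/
def u : R := Ideal.Quotient.mk _ (X : Polynomial (ZMod 2))

/-- The element `a + u·b + u²·c` of `R`. -/
def elt (a b c : ZMod 2) : R :=
  algebraMap (ZMod 2) R a + algebraMap (ZMod 2) R b * u + algebraMap (ZMod 2) R c * u ^ 2

/-- `Φ` is the Gray map: `Φ(a + u·b + u²·c) = (a, a + c, b)`. -/
def GraySpec (Φ : R → Fin 3 → ZMod 2) : Prop :=
  ∀ a b c : ZMod 2, Φ (elt a b c) = ![a, a + c, b]

/-- The coordinatewise extension of the Gray map, `Rⁿ → (ZMod 2)^{3n}`. -/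
def grayExt (Φ : R → Fin 3 → ZMod 2) (n : ℕ) (x : Fin n → R) :
    Fin n × Fin 3 → ZMod 2 :=
  fun p => Φ (x p.1) p.2

lemma u_cube : (u : R) ^ 3 = u := by
  have h : (Ideal.Quotient.mk _ (X ^ 3 - X : Polynomial (ZMod 2)) : R) = 0 :=
    Ideal.Quotient.eq_zero_iff_mem.mpr (Ideal.subset_span (Set.mem_singleton _))
  have := sub_eq_zero.mp (by simpa [map_sub, map_pow, u] using h)
  simpa [u, map_pow] using this

lemma elt_add (a b c a' b' c' : ZMod 2) :
    elt a b c + elt a' b' c' = elt (a + a') (b + b') (c + c') := by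
  simp only [elt, map_add]; ring

lemma elt_sub (a b c a' b' c' : ZMod 2) :
    elt a b c - elt a' b' c' = elt (a - a') (b - b') (c - c') := by
  simp only [elt, map_sub]; ring

lemma u_mul_elt (a b c : ZMod 2) : u * elt a b c = elt 0 (a + c) b := by
  simp only [elt, map_add, map_zero]
  linear_combination (algebraMap (ZMod 2) R c) * u_cube

lemma exists_rep (r : R) : ∃ a b c, r = elt a b c := by
  obtain ⟨p, rfl⟩ := Ideal.Quotient.mk_surjective r
  induction p using Polynomial.induction_on with
  | C a => exact ⟨a, 0, 0, by simp [elt]; rfl⟩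
  | add p q hp hq =>
    obtain ⟨a, b, c, hp⟩ := hp
    obtain ⟨a', b', c', hq⟩ := hq
    exact ⟨a + a', b + b', c + c', by rw [map_add, hp, hq, elt_add]⟩
  | monomial m a ih =>
    obtain ⟨a', b', c', h⟩ := ih
    refine ⟨0, a' + c', b', ?_⟩
    have e : C a * X ^ (m + 1) = X * (C a * X ^ m) := by ring
    have : (Ideal.Quotient.mk _ (C a * X ^ (m + 1)) : R)
        = u * Ideal.Quotient.mk _ (C a * X ^ m) := by
      rw [e, map_mul]; rfl
    rw [this, h, u_mul_elt]

lemma elt000 : elt 0 0 0 = 0 := by simp [elt]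
lemma elt100 : elt 1 0 0 = 1 := by simp [elt]
lemma elt010 : elt 0 1 0 = u := by simp [elt]
lemma elt001 : elt 0 0 1 = u ^ 2 := by simp [elt]
lemma elt110 : elt 1 1 0 = 1 + u := by simp [elt]
lemma elt101 : elt 1 0 1 = 1 + u ^ 2 := by simp [elt]
lemma elt011 : elt 0 1 1 = u + u ^ 2 := by simp [elt]
lemma elt111 : elt 1 1 1 = 1 + u + u ^ 2 := by simp [elt]

/-- The extended Gray map is distance preserving from (`Rⁿ`, Lee distance) to
(`(ZMod 2)^{3n}`, Hamming distance). -/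
theorem grayExt_distance_preserving (n : ℕ) (Φ : R → Fin 3 → ZMod 2) (hΦ : GraySpec Φ)
    (wL : R → ℕ)
    (h0 : wL 0 = 0) (h1 : wL 1 = 2) (hu : wL u = 1) (hu2 : wL (u ^ 2) = 1)
    (h1u : wL (1 + u) = 3) (h1u2 : wL (1 + u ^ 2) = 1)
    (huu2 : wL (u + u ^ 2) = 2) (h1uu2 : wL (1 + u + u ^ 2) = 2) :
    ∀ x y : Fin n → R,
      hammingDist (grayExt Φ n x) (grayExt Φ n y) = ∑ i, wL (x i - y i) := by
  have two : ∀ t : ZMod 2, t = 0 ∨ t = 1 := by decide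
  have key : ∀ r s : R, hammingDist (Φ r) (Φ s) = wL (r - s) := by
    intro r s
    obtain ⟨a, b, c, rfl⟩ := exists_rep r
    obtain ⟨a', b', c', rfl⟩ := exists_rep s
    rw [elt_sub, hΦ, hΦ, hammingDist_comm, hammingDist_eq_hammingNorm, neg_add_eq_sub]
    have hdiff : ![a, a + c, b] - ![a', a' + c', b']
        = ![a - a', (a - a') + (c - c'), b - b'] := by
      funext i; fin_cases i <;> simp <;> ring
    rw [hdiff]
    generalize a - a' = A
    generalize b - b' = B
    generalize c - c' = C
    rcases two A with rfl | rfl <;> rcases two B with rfl | rfl <;>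
        rcases two C with rfl | rfl <;>
      simp only [add_zero, zero_add, add_self_eq_zero, elt000, elt100, elt010, elt001,
        elt110, elt101, elt011, elt111,
        h0, h1, hu, hu2, h1u, h1u2, huu2, h1uu2] <;> decide
  intro x y
  have : hammingDist (grayExt Φ n x) (grayExt Φ n y)
      = ∑ i : Fin n, hammingDist (Φ (x i)) (Φ (y i)) := by
    rw [hammingDist, Finset.card_filter, Fintype.sum_prod_type]
    simp only [hammingDist, Finset.card_filter, Fintype.sum_prod_type, grayExt]
    congr! 1
  rw [this]
  exact Finset.sum_congr rfl fun i _ => key (x i) (y i)
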